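/- Let S = {s₁, s₂, …} be an inhabited, countable, pseudobounded subset of ℕ with s₁ ≤ s₂ ≤ ⋯, let (λ_k) be a binary sequence with λ_k = 1 if s_{2^{k+1}} > s_{2^k} and λ_k = 0 if s_{2^{k+1}} = s_{2^k}, and define aₙ = λ_k/(n+1) for 2^k + 1 ≤ n + 1 < 2^{k+1}. If ∑ aₙ converges, then S is bounded. -/

import Mathlib

def SeriesConvTo (a : ℕ → ℝ) (s : ℝ) : Prop :=
  Filter.Tendsto (fun n => ∑ i ∈ Finset.range n, a i) Filter.atTop (nhds s)

/-- Property (ii) of Lemma 4.2: with `s` nondecreasing and pseudobounded, `λ` recording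
whether `s` increases across dyadic blocks, and `a` built from `λ`, convergence of
`∑ a n` implies the set `{s n : n}` is bounded. -/
theorem lemma42_ii (s : ℕ → ℕ) (lam : ℕ → ℕ) (a : ℕ → ℝ)
    (hmono : Monotone s)
    (hpseudo : Filter.Tendsto (fun n => (s n : ℝ) / n) Filter.atTop (nhds 0))
    (hlam1 : ∀ k, s (2 ^ k) < s (2 ^ (k + 1)) → lam k = 1)
    (hlam0 : ∀ k, s (2 ^ (k + 1)) = s (2 ^ k) → lam k = 0)
    (hblock : ∀ k n, 1 ≤ k → 2 ^ k + 1 ≤ n + 1 → n + 1 < 2 ^ (k + 1) →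
      a n = (lam k : ℝ) / (n + 1))
    (hconv : ∃ l, SeriesConvTo a l) :
    ∃ N, ∀ n, s n < N := by
  obtain ⟨l, hl⟩ := hconv
  have hcauchy : CauchySeq (fun n => ∑ i ∈ Finset.range n, a i) := hl.cauchySeq
  rw [Metric.cauchySeq_iff] at hcauchy
  obtain ⟨N, hN⟩ := hcauchy (1/4) (by norm_num)
  set K := N + 1 with hKdef
  have hK1 : 1 ≤ K := Nat.le_add_left 1 N
  have hKN : N ≤ 2 ^ K := le_trans (Nat.lt_two_pow_self (n := N)).le
    (Nat.pow_le_pow_right (by norm_num) (Nat.le_succ N))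
  have key : ∀ k, K ≤ k → s (2 ^ (k + 1)) = s (2 ^ k) := by
    intro k hk
    by_contra hne
    have hle : s (2 ^ k) ≤ s (2 ^ (k + 1)) :=
      hmono (Nat.pow_le_pow_right (by norm_num) (Nat.le_succ k))
    have hlt : s (2 ^ k) < s (2 ^ (k + 1)) :=
      lt_of_le_of_ne hle (fun h => hne h.symm)
    have hlam := hlam1 k hlt
    have hk1 : 1 ≤ k := le_trans hK1 hk
    have h2k : (2 : ℕ) ≤ 2 ^ k := by
      calc (2 : ℕ) = 2 ^ 1 := rfl
      _ ≤ 2 ^ k := Nat.pow_le_pow_right (by norm_num) hk1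
    have hN1 : N ≤ 2 ^ k := le_trans hKN (Nat.pow_le_pow_right (by norm_num) hk)
    have hlt2 : 2 ^ k ≤ 2 ^ (k + 1) - 1 := by
      have : 2 ^ k + 1 ≤ 2 ^ (k + 1) := by
        have := Nat.pow_lt_pow_right (a := 2) (by norm_num) (Nat.lt_succ_self k)
        omega
      omega
    have hdist := hN (2 ^ (k + 1) - 1) (le_trans hN1 hlt2) (2 ^ k) hN1
    rw [Real.dist_eq] at hdist
    -- The difference of partial sums is a block sum
    have hsum : (∑ i ∈ Finset.range (2 ^ (k + 1) - 1), a i)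
        - (∑ i ∈ Finset.range (2 ^ k), a i)
        = ∑ i ∈ Finset.Ico (2 ^ k) (2 ^ (k + 1) - 1), a i := by
      rw [Finset.sum_Ico_eq_sub _ hlt2]
    -- lower bound each term
    have hterm : ∀ i ∈ Finset.Ico (2 ^ k) (2 ^ (k + 1) - 1),
        (1 : ℝ) / 2 ^ (k + 1) ≤ a i := by
      intro i hi
      rw [Finset.mem_Ico] at hi
      have hai : a i = (lam k : ℝ) / (i + 1) :=
        hblock k i hk1 (by omega) (by omega)
      rw [hai, hlam]
      push_cast
      apply div_le_div_of_nonneg_left (by norm_num) (by positivity)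
      have : (i : ℝ) + 1 ≤ (2 : ℝ) ^ (k + 1) := by
        have : i + 1 ≤ 2 ^ (k + 1) := by omega
        exact_mod_cast this
      linarith
    have hcard : (Finset.Ico (2 ^ k) (2 ^ (k + 1) - 1)).card = 2 ^ k - 1 := by
      rw [Nat.card_Ico]
      have : 2 ^ (k + 1) = 2 * 2 ^ k := by ring
      omega
    have hlow := Finset.card_nsmul_le_sum _ _ _ hterm
    rw [hcard, nsmul_eq_mul] at hlow
    have hcast : ((2 ^ k - 1 : ℕ) : ℝ) = (2 : ℝ) ^ k - 1 := by
      push_cast [Nat.cast_sub (by omega : 1 ≤ 2 ^ k)]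
      ring
    rw [hcast] at hlow
    have hquarter : (1 : ℝ) / 4 ≤ ((2 : ℝ) ^ k - 1) * (1 / 2 ^ (k + 1)) := by
      have hx : (2 : ℝ) ≤ 2 ^ k := by exact_mod_cast h2k
      rw [mul_one_div, le_div_iff₀ (by positivity : (0 : ℝ) < 2 ^ (k + 1)), pow_succ]
      nlinarith
    rw [hsum] at hdist
    have habs := (abs_lt.mp hdist).2
    linarith
  -- s is constant on powers of 2 beyond K
  have const : ∀ m, s (2 ^ (K + m)) = s (2 ^ K) := by
    intro m
    induction m with
    | zero => rfl
    | succ m ih =>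
      rw [← ih, ← Nat.add_assoc]
      exact key (K + m) (Nat.le_add_right K m)
  refine ⟨s (2 ^ K) + 1, fun n => ?_⟩
  have h1 : n ≤ 2 ^ (K + n) := le_trans (Nat.lt_two_pow_self (n := n)).le
    (Nat.pow_le_pow_right (by norm_num) (Nat.le_add_left n K))
  have := hmono h1
  rw [const n] at this
  omega
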